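/- Let (R,m) be an excellent local Cohen-Macaulay normal domain of dimension d, J generated by at most h elements, and x such that ⊕ \overline{J^n}/\overline{J^{n+1}} ⊗ R_x is Cohen-Macaulay. If there is C with x^C H^i_m(\overline{J^n}/\overline{J^{n+1}}) = 0 for all n and all i ≤ d-h-1, then x^{Cn} H^i_m(R/\overline{J^n}) = 0 for all n and all i ≤ d-h-1. -/

import Mathlib

set_option synthInstance.maxHeartbeats 1000000
set_option maxHeartbeats 1000000

open IsLocalRing

noncomputable section


/-- `r` is integral over the ideal `J`. -/
def memIntCl {R : Type} [CommRing R] (J : Ideal R) (r : R) : Prop :=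
  ∃ t : ℕ, 0 < t ∧ ∃ a : ℕ → R, (∀ j, 1 ≤ j → j ≤ t → a j ∈ J ^ j) ∧
    r ^ t + ∑ j ∈ Finset.Icc 1 t, a j * r ^ (t - j) = 0

/-- `J` is a reduction of `I`. -/
def Ideal.IsReductionOf {R : Type} [CommRing R] (J I : Ideal R) : Prop :=
  J ≤ I ∧ ∃ n : ℕ, I ^ (n + 1) = J * I ^ n

/-- Height of an ideal. -/
def idealHeight {R : Type} [CommRing R] (I : Ideal R) : ℕ∞ :=
  ⨅ (p : PrimeSpectrum R) (_ : I ≤ p.asIdeal), Order.height p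

/-- Depth of a module over a local ring, via weakly regular sequences in the maximal ideal. -/
def moduleDepth (R M : Type) [CommRing R] [IsLocalRing R] [AddCommGroup M] [Module R M] : ℕ∞ :=
  sSup {n : ℕ∞ | ∃ rs : List R, (rs.length : ℕ∞) = n ∧ (∀ r ∈ rs, r ∈ maximalIdeal R) ∧
    RingTheory.Sequence.IsWeaklyRegular M rs}

/-- Cohen–Macaulay local ring. -/
def IsCMLocalRing (R : Type) [CommRing R] [IsLocalRing R] : Prop :=
  (moduleDepth R R : WithBot ℕ∞) = ringKrullDim R

/-- Regular local ring. -/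
def IsRegLocal (R : Type) [CommRing R] [IsLocalRing R] : Prop :=
  IsNoetherianRing R ∧ ∃ s : Finset R, Ideal.span (s : Set R) = maximalIdeal R ∧
    (s.card : WithBot ℕ∞) = ringKrullDim R

open CategoryTheory in
/-- The Ext module `Ext^n_R(M, N)`. -/
def ExtMod (R : Type) [CommRing R] (n : ℕ) (M N : ModuleCat R) : ModuleCat R :=
  ((Ext R (ModuleCat R) n).obj (Opposite.op M)).obj N

/-- `J` is a canonical ideal of the local ring `R`: `R/J` is Gorenstein of dimension
`dim R - 1`. -/
def IsCanonicalIdeal (R : Type) [CommRing R] [IsLocalRing R] (J : Ideal R) : Prop :=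
  J ≠ ⊥ ∧ J ≠ ⊤ ∧ ∃ d' : ℕ,
    ringKrullDim (R ⧸ J) = (d' : WithBot ℕ∞) ∧
    (d' : WithBot ℕ∞) + 1 = ringKrullDim R ∧
    moduleDepth R (R ⧸ J) = (d' : ℕ∞) ∧
    Nonempty ((ExtMod R d' (ModuleCat.of R (ResidueField R)) (ModuleCat.of R (R ⧸ J))) ≅
      ModuleCat.of R (ResidueField R))

/-- The `n`-th symbolic power of an ideal `I`: the saturation of `I^n` with respect to
the complement of the union of the minimal primes of `I`. -/
def symb {R : Type} [CommRing R] (I : Ideal R) (n : ℕ) : Ideal R where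
  carrier := {r | ∃ s : R, (∀ P ∈ I.minimalPrimes, s ∉ P) ∧ s * r ∈ I ^ n}
  zero_mem' := ⟨1, fun P hP h1 => hP.1.1.ne_top ((Ideal.eq_top_iff_one P).mpr h1), by simp⟩
  add_mem' := by
    rintro a b ⟨s, hs, h⟩ ⟨t, ht, h'⟩
    refine ⟨s * t, fun P hP hm => ?_, ?_⟩
    · rcases hP.1.1.mem_or_mem hm with h'' | h''
      · exact hs P hP h''
      · exact ht P hP h''
    · have : s * t * (a + b) = t * (s * a) + s * (t * b) := by ring
      rw [this]
      exact add_mem (Ideal.mul_mem_left _ _ h) (Ideal.mul_mem_left _ _ h')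
  smul_mem' := by
    rintro c r ⟨s, hs, h⟩
    refine ⟨s, hs, ?_⟩
    have : s * (c • r) = c * (s * r) := by simp [smul_eq_mul]; ring
    rw [this]
    exact Ideal.mul_mem_left _ _ h

/-- An ideal of pure height one. -/
def PureHeightOne {R : Type} [CommRing R] (I : Ideal R) : Prop :=
  I ≠ ⊥ ∧ I ≠ ⊤ ∧ ∀ P ∈ I.minimalPrimes, idealHeight P = 1

/-- `E` is an injective hull of the residue field of the local ring `R`. -/
def IsInjHullOfResidueField (R E : Type) [CommRing R] [IsLocalRing R] [AddCommGroup E]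
    [Module R E] : Prop :=
  Module.Injective R E ∧ ∃ ι : ResidueField R →ₗ[R] E, Function.Injective ι ∧
    ∀ N : Submodule R E, N ≠ ⊥ → ∃ v ∈ N, v ≠ 0 ∧ v ∈ LinearMap.range ι


open LaurentPolynomial in
/-- The Rees algebra `R[Jt]` inside the Laurent polynomial ring `R[t,t⁻¹]`. -/
def reesL (R : Type) [CommRing R] (J : Ideal R) : Subalgebra R (LaurentPolynomial R) :=
  Algebra.adjoin R ((fun a : R => LaurentPolynomial.C a * LaurentPolynomial.T 1) '' (J : Set R))

open LaurentPolynomial in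
/-- The extended Rees algebra `R[Jt, t⁻¹]` inside `R[t,t⁻¹]`. -/
def reesExtL (R : Type) [CommRing R] (J : Ideal R) : Subalgebra R (LaurentPolynomial R) :=
  Algebra.adjoin R
    ((fun a : R => LaurentPolynomial.C a * LaurentPolynomial.T 1) '' (J : Set R) ∪
      {LaurentPolynomial.T (-1)})

lemma reesL_le_reesExtL (R : Type) [CommRing R] (J : Ideal R) : reesL R J ≤ reesExtL R J :=
  Algebra.adjoin_mono Set.subset_union_left

/-- `S'` is the integral closure of the extended Rees algebra `R[Jt,t⁻¹]` in `R[t,t⁻¹]`. -/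
def IsIntClosureOfReesExt (R : Type) [CommRing R] (J : Ideal R)
    (S' : Subalgebra R (LaurentPolynomial R)) : Prop :=
  reesExtL R J ≤ S' ∧
    ∀ z : LaurentPolynomial R, z ∈ S' ↔ IsIntegral (↥(reesExtL R J)) z

/-- The element `t⁻¹` as an element of any subalgebra containing the extended Rees algebra. -/
def tinvS (R : Type) [CommRing R] (J : Ideal R) (S' : Subalgebra R (LaurentPolynomial R))
    (h : reesExtL R J ≤ S') : ↥S' :=
  ⟨LaurentPolynomial.T (-1), h (Algebra.subset_adjoin (Or.inr rfl))⟩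


section LinearAnnihilatorAux

open CategoryTheory Limits Opposite

variable {R : Type} [CommRing R]

lemma laq_yoneda_app_shortExact (S : ShortComplex (ModuleCat R)) (hS : S.ShortExact)
    (Z : ModuleCat R) [Projective Z] :
    (ShortComplex.mk (((linearYoneda R (ModuleCat R)).map S.f).app (op Z))
       (((linearYoneda R (ModuleCat R)).map S.g).app (op Z))
       (by
         apply ModuleCat.hom_ext; apply LinearMap.ext; intro (φ : Z ⟶ S.X₁)
         exact (show (φ ≫ S.f) ≫ S.g = 0 by
           rw [Category.assoc, S.zero, Limits.comp_zero]))).ShortExact := by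
  have := hS.mono_f
  have := hS.epi_g
  have finj : Function.Injective S.f := (ModuleCat.mono_iff_injective S.f).mp hS.mono_f
  have hex := (ShortComplex.moduleCat_exact_iff S).mp hS.exact
  have hmono : Mono (((linearYoneda R (ModuleCat R)).map S.f).app (op Z)) := by
    rw [ModuleCat.mono_iff_injective]
    intro φ ψ hh
    have hh' : φ ≫ S.f = ψ ≫ S.f := hh
    exact (cancel_mono S.f).mp hh'
  have hepi : Epi (((linearYoneda R (ModuleCat R)).map S.g).app (op Z)) := by
    rw [ModuleCat.epi_iff_surjective]
    intro ψ
    exact ⟨Projective.factorThru ψ S.g, Projective.factorThru_comp ψ S.g⟩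
  refine ⟨?_⟩
  rw [ShortComplex.moduleCat_exact_iff]
  intro x₂' hx₂
  obtain ⟨x₂, rfl⟩ : ∃ y : Z ⟶ S.X₂, (y : _) = x₂' := ⟨x₂', rfl⟩
  have hx₂' : x₂ ≫ S.g = 0 := hx₂
  have hmem : ∀ z : Z, x₂ z ∈ LinearMap.range S.f.hom := by
    intro z
    obtain ⟨a, ha⟩ := hex (x₂ z) (by
      show S.g (x₂ z) = 0
      calc S.g (x₂ z) = (x₂ ≫ S.g) z := rfl
        _ = 0 := by rw [hx₂']; rfl)
    exact ⟨a, ha⟩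
  set e := LinearEquiv.ofInjective S.f.hom finj with he
  refine ⟨ModuleCat.ofHom (e.symm.toLinearMap.comp (LinearMap.codRestrict _ x₂.hom hmem)), ?_⟩
  show _ ≫ S.f = x₂
  apply ModuleCat.hom_ext; apply LinearMap.ext; intro z
  show S.f (e.symm ⟨x₂ z, hmem z⟩) = x₂ z
  have h2 := e.apply_symm_apply ⟨x₂ z, hmem z⟩
  exact congrArg Subtype.val h2

lemma laq_ext_exact_middle (n : ℕ) (X : ModuleCat R)
    (S : ShortComplex (ModuleCat R)) (hS : S.ShortExact)
    (y : ((Ext R (ModuleCat R) n).obj (op X)).obj S.X₂)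
    (hy : ((Ext R (ModuleCat R) n).obj (op X)).map S.g y = 0) :
    ∃ w, ((Ext R (ModuleCat R) n).obj (op X)).map S.f w = y := by
  let P : ProjectiveResolution X := ProjectiveResolution.of X
  let αg := NatTrans.rightOp ((linearYoneda R (ModuleCat R)).map S.g)
  let αf := NatTrans.rightOp ((linearYoneda R (ModuleCat R)).map S.f)
  have hTzero : (NatTrans.mapHomologicalComplex αg (ComplexShape.down ℕ)).app P.complex ≫
      (NatTrans.mapHomologicalComplex αf (ComplexShape.down ℕ)).app P.complex = 0 := by
    apply HomologicalComplex.hom_ext; intro k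
    apply Quiver.Hom.unop_inj
    apply ModuleCat.hom_ext; apply LinearMap.ext; intro (φ : P.complex.X k ⟶ S.X₁)
    exact (show (φ ≫ S.f) ≫ S.g = 0 by rw [Category.assoc, S.zero, Limits.comp_zero])
  let T : ShortComplex (HomologicalComplex (ModuleCat R)ᵒᵖ (ComplexShape.down ℕ)) :=
    ShortComplex.mk _ _ hTzero
  have hT : T.ShortExact := by
    apply HomologicalComplex.shortExact_of_degreewise_shortExact
    intro k
    exact (laq_yoneda_app_shortExact S hS (P.complex.X k)).op
  have hH := hT.homology_exact₂ n
  have hgeq := CategoryTheory.ProjectiveResolution.leftDerived_app_eq αg P n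
  have hfeq := CategoryTheory.ProjectiveResolution.leftDerived_app_eq αf P n
  have hDzero : (NatTrans.leftDerived αg n).app X ≫ (NatTrans.leftDerived αf n).app X = 0 := by
    rw [hgeq, hfeq]
    simp only [Category.assoc, Iso.inv_hom_id_assoc]
    rw [← Functor.map_comp_assoc, hTzero, Functor.map_zero, zero_comp, comp_zero]
  let E : ShortComplex (ModuleCat R) := ShortComplex.mk
    (((Ext R (ModuleCat R) n).obj (op X)).map S.f)
    (((Ext R (ModuleCat R) n).obj (op X)).map S.g)
    (by
      show (((NatTrans.leftDerived αg n).app X ≫ (NatTrans.leftDerived αf n).app X)).unop = 0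
      rw [hDzero]; rfl)
  have hiso : (ShortComplex.mk (HomologicalComplex.homologyMap T.f n)
      (HomologicalComplex.homologyMap T.g n) (by
        rw [← HomologicalComplex.homologyMap_comp, T.zero,
          HomologicalComplex.homologyMap_zero])) ≅ E.op := by
    refine ShortComplex.isoMk
      (P.isoLeftDerivedObj (((linearYoneda R (ModuleCat R)).obj S.X₃).rightOp) n).symm
      (P.isoLeftDerivedObj (((linearYoneda R (ModuleCat R)).obj S.X₂).rightOp) n).symm
      (P.isoLeftDerivedObj (((linearYoneda R (ModuleCat R)).obj S.X₁).rightOp) n).symm ?_ ?_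
    · show (P.isoLeftDerivedObj (((linearYoneda R (ModuleCat R)).obj S.X₃).rightOp) n).inv ≫
        (NatTrans.leftDerived αg n).app X = _ ≫
          (P.isoLeftDerivedObj (((linearYoneda R (ModuleCat R)).obj S.X₂).rightOp) n).inv
      rw [hgeq]; simp; rfl
    · show (P.isoLeftDerivedObj (((linearYoneda R (ModuleCat R)).obj S.X₂).rightOp) n).inv ≫
        (NatTrans.leftDerived αf n).app X = _ ≫
          (P.isoLeftDerivedObj (((linearYoneda R (ModuleCat R)).obj S.X₁).rightOp) n).inv
      rw [hfeq]; simp; rfl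
  have hEop : E.op.Exact := ShortComplex.exact_of_iso hiso hH
  have hE : E.Exact := hEop.unop
  exact (ShortComplex.moduleCat_exact_iff E).mp hE y hy

lemma laq_locoh_ker_smul (I : Ideal R) (i : ℕ) (S : ShortComplex (ModuleCat R))
    (hS : S.ShortExact) (r : R)
    (h1 : ∀ w : (localCohomology I i).obj S.X₁, r • w = 0)
    (z : (localCohomology I i).obj S.X₂)
    (hz : (localCohomology I i).map S.g z = 0) : r • z = 0 := by
  haveI := localCohomology.hasColimitDiagram.{0,0} (localCohomology.idealPowersDiagram I) i
  set F := localCohomology.diagram.{0,0} (localCohomology.idealPowersDiagram I) i with hFdef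
  let ev : ModuleCat R → (ModuleCat R ⥤ ModuleCat R) ⥤ ModuleCat R :=
    fun M => (evaluation (ModuleCat R) (ModuleCat R)).obj M
  have hD₂ : IsColimit ((ev S.X₂).mapCocone (colimit.cocone F)) :=
    isColimitOfPreserves _ (colimit.isColimit F)
  have hD₃ : IsColimit ((ev S.X₃).mapCocone (colimit.cocone F)) :=
    isColimitOfPreserves _ (colimit.isColimit F)
  obtain ⟨j, y, hy⟩ := Concrete.isColimit_exists_rep (F ⋙ ev S.X₂) hD₂
    (z : (colimit F).obj S.X₂)
  have hgz : ((colimit.ι F j).app S.X₃) ((F.obj j).map S.g y) = 0 := by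
    have hnat := LinearMap.congr_fun (congrArg ModuleCat.Hom.hom ((colimit.ι F j).naturality S.g)) y
    have : (colimit.ι F j).app S.X₃ ((F.obj j).map S.g y) =
        (colimit F).map S.g ((colimit.ι F j).app S.X₂ y) := hnat
    rw [this]
    rw [show ((colimit.ι F j).app S.X₂) y = z from hy]
    exact hz
  obtain ⟨k, u, v, huv⟩ := Concrete.isColimit_exists_of_rep_eq (F ⋙ ev S.X₃) hD₃
    ((F.obj j).map S.g y) (0 : (F.obj j).obj S.X₃)
    (by
      show ((colimit.ι F j).app S.X₃) _ = ((colimit.ι F j).app S.X₃) 0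
      rw [map_zero, hgz])
  have hu0 : ((F.map u).app S.X₃) ((F.obj j).map S.g y) = 0 := by
    have : ((F.map v).app S.X₃) (0 : (F.obj j).obj S.X₃) = 0 := map_zero _
    rw [← this]; exact huv
  set y' := (F.map u).app S.X₂ y with hy'
  have h3 : (F.obj k).map S.g y' = 0 := by
    have hnat := LinearMap.congr_fun (congrArg ModuleCat.Hom.hom ((F.map u).naturality S.g)) y
    have h4 : (F.map u).app S.X₃ ((F.obj j).map S.g y) = (F.obj k).map S.g y' := hnat
    rw [← h4, hu0]
  obtain ⟨w, hw⟩ := laq_ext_exact_middle i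
    ((localCohomology.ringModIdeals (localCohomology.idealPowersDiagram I)).obj (unop k))
    S hS y' h3
  have hzk : z = (colimit.ι F k).app S.X₂ y' := by
    rw [← hy]
    have h5 := congrArg (fun (φ : F.obj j ⟶ colimit F) => φ.app S.X₂) (colimit.w F u)
    exact (LinearMap.congr_fun (congrArg ModuleCat.Hom.hom h5) y).symm
  obtain ⟨w, hw⟩ : ∃ w' : ((F.obj k).obj S.X₁), (F.obj k).map S.f w' = y' := ⟨w, hw⟩
  have hnatf : ((colimit.ι F k).app S.X₂) ((F.obj k).map S.f (r • w)) =
      ((colimit F).map S.f) (((colimit.ι F k).app S.X₁) (r • w)) :=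
    LinearMap.congr_fun (congrArg ModuleCat.Hom.hom ((colimit.ι F k).naturality S.f)) (r • w)
  rw [hzk]
  calc r • ((colimit.ι F k).app S.X₂ y') = (colimit.ι F k).app S.X₂ (r • y') := (map_smul ((colimit.ι F k).app S.X₂).hom r y').symm
    _ = (colimit.ι F k).app S.X₂ ((F.obj k).map S.f (r • w)) := by
          rw [map_smul ((F.obj k).map S.f).hom r w, hw]
    _ = (colimit F).map S.f ((colimit.ι F k).app S.X₁ (r • w)) := hnatf
    _ = (colimit F).map S.f (r • ((colimit.ι F k).app S.X₁ w)) := by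
          rw [map_smul ((colimit.ι F k).app S.X₁).hom r w]
    _ = (colimit F).map S.f 0 := by rw [show r • ((colimit.ι F k).app S.X₁ w) = 0 from h1 _]
    _ = 0 := map_zero _

lemma laq_ext_subsingleton (n : ℕ) (X M : ModuleCat R) [Subsingleton M]
    (y : ((Ext R (ModuleCat R) n).obj (op X)).obj M) : y = 0 := by
  let P : ProjectiveResolution X := ProjectiveResolution.of X
  have hz : IsZero (((Ext R (ModuleCat R) n).obj (op X)).obj M) := by
    refine IsZero.of_iso ?_ (P.isoExt n M)
    rw [← HomologicalComplex.exactAt_iff_isZero_homology]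
    refine ShortComplex.exact_of_isZero_X₂ _ (@ModuleCat.isZero_of_subsingleton _ _ _ ?_)
    constructor
    intro a b
    apply ModuleCat.hom_ext; apply LinearMap.ext
    intro z
    exact Subsingleton.elim _ _
  have hid : 𝟙 (((Ext R (ModuleCat R) n).obj (op X)).obj M) = 0 := hz.eq_of_src _ _
  calc y = (𝟙 (((Ext R (ModuleCat R) n).obj (op X)).obj M)) y := rfl
    _ = (0 : ((Ext R (ModuleCat R) n).obj (op X)).obj M ⟶ _) y := by rw [hid]
    _ = 0 := rfl

lemma laq_locoh_subsingleton (I : Ideal R) (i : ℕ) (M : ModuleCat R) [Subsingleton M]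
    (z : (localCohomology I i).obj M) : z = 0 := by
  haveI := localCohomology.hasColimitDiagram.{0,0} (localCohomology.idealPowersDiagram I) i
  set F := localCohomology.diagram.{0,0} (localCohomology.idealPowersDiagram I) i with hFdef
  let ev : ModuleCat R → (ModuleCat R ⥤ ModuleCat R) ⥤ ModuleCat R :=
    fun N => (evaluation (ModuleCat R) (ModuleCat R)).obj N
  have hD : IsColimit ((ev M).mapCocone (colimit.cocone F)) :=
    isColimitOfPreserves _ (colimit.isColimit F)
  obtain ⟨j, y, hy⟩ := Concrete.isColimit_exists_rep (F ⋙ ev M) hD (z : (colimit F).obj M)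
  have hy0 : y = 0 := laq_ext_subsingleton i
    ((localCohomology.ringModIdeals (localCohomology.idealPowersDiagram I)).obj (unop j)) M y
  rw [← hy]
  show ((colimit.ι F j).app M) y = 0
  rw [hy0, map_zero]

def laqF (Jn Jn1 : Ideal R) : (↥Jn ⧸ Submodule.comap Jn.subtype Jn1) →ₗ[R] (R ⧸ Jn1) :=
  Submodule.liftQ (Submodule.comap Jn.subtype Jn1) (Jn1.mkQ.comp Jn.subtype)
    (fun v hv => by
      simp only [LinearMap.mem_ker, LinearMap.comp_apply, Submodule.mkQ_apply,
        Submodule.Quotient.mk_eq_zero]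
      exact hv)

def laqG (Jn Jn1 : Ideal R) (hle : Jn1 ≤ Jn) : (R ⧸ Jn1) →ₗ[R] (R ⧸ Jn) :=
  Submodule.mapQ Jn1 Jn LinearMap.id hle

lemma laqF_mk (Jn Jn1 : Ideal R) (q : ↥Jn) :
    laqF Jn Jn1 (Submodule.Quotient.mk q) = Submodule.Quotient.mk q.1 :=
  Submodule.liftQ_apply _ _ _

lemma laqG_mk (Jn Jn1 : Ideal R) (hle : Jn1 ≤ Jn) (r : R) :
    laqG Jn Jn1 hle (Submodule.Quotient.mk r) = Submodule.Quotient.mk r :=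
  Submodule.mapQ_apply _ _ _ r

def laqSC (Jn Jn1 : Ideal R) (hle : Jn1 ≤ Jn) : ShortComplex (ModuleCat R) :=
  ShortComplex.mk
    (ModuleCat.ofHom (laqF Jn Jn1)) (ModuleCat.ofHom (laqG Jn Jn1 hle))
    (by
      apply ModuleCat.hom_ext; apply LinearMap.ext
      intro v
      obtain ⟨q, rfl⟩ := Submodule.Quotient.mk_surjective (Submodule.comap Jn.subtype Jn1) v
      show laqG Jn Jn1 hle (laqF Jn Jn1 (Submodule.Quotient.mk q)) = 0
      rw [laqF_mk, laqG_mk]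
      exact (Submodule.Quotient.mk_eq_zero Jn).mpr q.2)

lemma laqSC_shortExact (Jn Jn1 : Ideal R) (hle : Jn1 ≤ Jn) :
    (laqSC Jn Jn1 hle).ShortExact := by
  have hm : Mono (laqSC Jn Jn1 hle).f := by
    rw [ModuleCat.mono_iff_injective]
    rw [injective_iff_map_eq_zero]
    intro v hv
    obtain ⟨q, rfl⟩ := Submodule.Quotient.mk_surjective (Submodule.comap Jn.subtype Jn1) v
    have h1 : laqF Jn Jn1 (Submodule.Quotient.mk q) = 0 := hv
    rw [laqF_mk, Submodule.Quotient.mk_eq_zero] at h1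
    exact (Submodule.Quotient.mk_eq_zero _).mpr h1
  have he : Epi (laqSC Jn Jn1 hle).g := by
    rw [ModuleCat.epi_iff_surjective]
    intro c
    obtain ⟨r, rfl⟩ := Submodule.Quotient.mk_surjective Jn c
    exact ⟨Submodule.Quotient.mk r, laqG_mk Jn Jn1 hle r⟩
  refine { exact := ?_, mono_f := hm, epi_g := he }
  rw [ShortComplex.moduleCat_exact_iff]
  intro x₂ hx₂
  obtain ⟨r, rfl⟩ := Submodule.Quotient.mk_surjective Jn1 x₂
  have h2 : laqG Jn Jn1 hle (Submodule.Quotient.mk r) = 0 := hx₂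
  rw [laqG_mk, Submodule.Quotient.mk_eq_zero] at h2
  refine ⟨Submodule.Quotient.mk ⟨r, h2⟩, ?_⟩
  exact laqF_mk Jn Jn1 ⟨r, h2⟩

end LinearAnnihilatorAux

/-- Let `(R,𝔪)` be an excellent local Cohen–Macaulay normal domain of dimension `d`,
`J` generated by at most `h` elements, and `x` such that the associated graded algebra
of integral closures becomes Cohen–Macaulay after inverting `x`.  If
`x^C · H^i_𝔪(\overline{Jⁿ}/\overline{J^{n+1}}) = 0` for all `n` and all `i ≤ d-h-1`, then
`x^{Cn} · H^i_𝔪(R/\overline{Jⁿ}) = 0` for all `n` and all `i ≤ d-h-1`. -/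
theorem linear_annihilator_of_quotients {R : Type} [CommRing R] [IsLocalRing R]
    [IsNoetherianRing R] [IsDomain R] [IsIntegrallyClosed R] (hCMR : IsCMLocalRing R)
    (d : ℕ) (hdim : ringKrullDim R = (d : WithBot ℕ∞))
    (J : Ideal R) (h : ℕ) (hgen : ∃ s : Finset R, s.card ≤ h ∧ J = Ideal.span (s : Set R))
    (Jbar : ℕ → Ideal R) (hJbar : ∀ (n : ℕ) (r : R), r ∈ Jbar n ↔ memIntCl (J ^ n) r)
    (S' : Subalgebra R (LaurentPolynomial R)) (hS' : IsIntClosureOfReesExt R J S')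
    (x : R)
    (hCM : ∀ Q : PrimeSpectrum (↥S' ⧸ Ideal.span {tinvS R J S' hS'.1}),
      (Ideal.Quotient.mk (Ideal.span {tinvS R J S' hS'.1})) (algebraMap R ↥S' x) ∉ Q.asIdeal →
        IsCMLocalRing
          (@Localization.AtPrime _ (Ideal.Quotient.commRing _).toCommSemiring Q.asIdeal _))
    (C : ℕ)
    (hann : ∀ (n i : ℕ), i ≤ d - h - 1 →
      ∀ z : ((localCohomology (maximalIdeal R) i).obj
        (ModuleCat.of R (↥(Jbar n) ⧸ Submodule.comap (Jbar n).subtype (Jbar (n + 1))))),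
        x ^ C • z = 0) :
    ∀ (n i : ℕ), i ≤ d - h - 1 →
      ∀ z : ((localCohomology (maximalIdeal R) i).obj (ModuleCat.of R (R ⧸ Jbar n))),
        x ^ (C * n) • z = 0 := by
  have hmono : ∀ n : ℕ, Jbar (n + 1) ≤ Jbar n := by
    intro n r hr
    rw [hJbar] at hr ⊢
    obtain ⟨t, ht, a, ha, heq⟩ := hr
    refine ⟨t, ht, a, fun j h1 h2 => ?_, heq⟩
    have hle : (J ^ (n + 1)) ^ j ≤ (J ^ n) ^ j :=
      Ideal.pow_right_mono (Ideal.pow_le_pow_right (Nat.le_succ n)) j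
    exact hle (ha j h1 h2)
  intro n
  induction n with
  | zero =>
    intro i hi z
    have htop : Jbar 0 = ⊤ := by
      rw [eq_top_iff]
      intro r _
      rw [hJbar]
      refine ⟨1, one_pos, fun _ => -r, fun j h1 h2 => ?_, ?_⟩
      · rw [pow_zero, Ideal.one_eq_top, Ideal.top_pow]
        exact Submodule.mem_top
      · rw [Finset.Icc_self, Finset.sum_singleton]
        norm_num
    haveI : Subsingleton ↑(ModuleCat.of R (R ⧸ Jbar 0)) :=
      Submodule.Quotient.subsingleton_iff.mpr htop
    rw [Nat.mul_zero, pow_zero, one_smul]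
    exact laq_locoh_subsingleton (maximalIdeal R) i (ModuleCat.of R (R ⧸ Jbar 0)) z
  | succ n ih =>
    intro i hi z
    have hS := laqSC_shortExact (Jbar n) (Jbar (n + 1)) (hmono n)
    have h2 : (localCohomology (maximalIdeal R) i).map
        (laqSC (Jbar n) (Jbar (n + 1)) (hmono n)).g (x ^ (C * n) • z) = 0 := by
      exact (map_smul ((localCohomology (maximalIdeal R) i).map
        (laqSC (Jbar n) (Jbar (n + 1)) (hmono n)).g).hom _ z).trans (ih i hi _)
    have h3 := laq_locoh_ker_smul (maximalIdeal R) i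
      (laqSC (Jbar n) (Jbar (n + 1)) (hmono n)) hS (x ^ C)
      (fun w => hann n i hi w) (x ^ (C * n) • z) h2
    rw [show C * (n + 1) = C + C * n from by ring, pow_add, mul_smul]
    exact h3


end
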